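/- arXiv:2408.11944 — 2 statements merged into one kernel-verified Lean document; each statement's English description precedes it below -/
import Mathlib

section
/- Let k < l < m be natural numbers, r ∈ ℕ, and let (x^ν)_{ν∈ℕ} be a sequence of double sequences x^ν : ℕ×ℕ → ℂ such that (i) i^r j^{-k} |x^ν_{ij}| < 1 for all ν, i, j, and (ii) for every real t > 0, sup_{i,j} i^t j^{-m} |x^ν_{ij}| → 0 as ν → ∞. Then for every natural number s > r, sup_{i,j} i^s j^{-l} |x^ν_{ij}| → 0 as ν → ∞. -/
open ENNReal Filter

theorem stmt_3 (k l m : ℕ) (hkl : k < l) (hlm : l < m) (r : ℕ)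
    (x : ℕ → ℕ+ → ℕ+ → ℂ)
    (hbd : ∀ ν : ℕ, ∀ i j : ℕ+,
      (i : ℝ) ^ (r : ℝ) * (j : ℝ) ^ (-(k : ℝ)) * ‖x ν i j‖ < 1)
    (hconv : ∀ t : ℝ, 0 < t →
      Tendsto (fun ν : ℕ => ⨆ i : ℕ+, ⨆ j : ℕ+,
        ENNReal.ofReal ((i : ℝ) ^ t * (j : ℝ) ^ (-(m : ℝ)) * ‖x ν i j‖))
        atTop (nhds 0)) :
    ∀ s : ℕ, r < s →
      Tendsto (fun ν : ℕ => ⨆ i : ℕ+, ⨆ j : ℕ+,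
        ENNReal.ofReal ((i : ℝ) ^ (s : ℝ) * (j : ℝ) ^ (-(l : ℝ)) * ‖x ν i j‖))
        atTop (nhds 0) := by
  intro s hs
  have hmk : (0:ℝ) < (m:ℝ) - (k:ℝ) := sub_pos.mpr (by exact_mod_cast hkl.trans hlm)
  have hlk : (0:ℝ) < (l:ℝ) - (k:ℝ) := sub_pos.mpr (by exact_mod_cast hkl)
  set θ : ℝ := ((l:ℝ) - k) / ((m:ℝ) - k) with hθdef
  have hθpos : 0 < θ := div_pos hlk hmk
  have hθlt : θ < 1 := (div_lt_one hmk).2 (by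
    have : (l:ℝ) < m := by exact_mod_cast hlm
    linarith)
  have hmkθ : ((m:ℝ) - k) * θ = (l:ℝ) - k := by
    rw [hθdef]; field_simp
  set t : ℝ := ((s:ℝ) - r * (1 - θ)) / θ with htdef
  have hrs : (r:ℝ) < s := by exact_mod_cast hs
  have hst : 0 < (s:ℝ) - r * (1 - θ) := by nlinarith [Nat.cast_nonneg (α := ℝ) r]
  have ht : 0 < t := div_pos hst hθpos
  have hθt : t * θ = (s:ℝ) - r * (1 - θ) := by
    rw [htdef]; field_simp
  -- key estimate
  set T : ℕ → ℝ≥0∞ := fun ν => ⨆ i : ℕ+, ⨆ j : ℕ+,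
      ENNReal.ofReal ((i : ℝ) ^ t * (j : ℝ) ^ (-(m : ℝ)) * ‖x ν i j‖) with hTdef
  have key : ∀ ν : ℕ, (⨆ i : ℕ+, ⨆ j : ℕ+,
      ENNReal.ofReal ((i : ℝ) ^ (s : ℝ) * (j : ℝ) ^ (-(l : ℝ)) * ‖x ν i j‖))
      ≤ (T ν) ^ θ := by
    intro ν
    refine iSup_le fun i => iSup_le fun j => ?_
    have hI : (0:ℝ) < (i:ℝ) := by exact_mod_cast i.pos
    have hJ : (0:ℝ) < (j:ℝ) := by exact_mod_cast j.pos
    set A : ℝ := ‖x ν i j‖ with hA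
    have hA0 : 0 ≤ A := norm_nonneg _
    set c : ℝ := (i:ℝ) ^ (r:ℝ) * (j:ℝ) ^ (-(k:ℝ)) * A with hc
    set b : ℝ := (i:ℝ) ^ t * (j:ℝ) ^ (-(m:ℝ)) * A with hb
    have hc0 : 0 ≤ c := by positivity
    have hb0 : 0 ≤ b := by positivity
    have heq : (i:ℝ) ^ (s:ℝ) * (j:ℝ) ^ (-(l:ℝ)) * A = c ^ (1 - θ) * b ^ θ := by
      rw [hc, hb]
      rw [Real.mul_rpow (by positivity) hA0, Real.mul_rpow (by positivity) (by positivity),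
        Real.mul_rpow (by positivity) hA0, Real.mul_rpow (by positivity) (by positivity),
        ← Real.rpow_mul hI.le, ← Real.rpow_mul hJ.le,
        ← Real.rpow_mul hI.le, ← Real.rpow_mul hJ.le]
      have e1 : (r:ℝ) * (1 - θ) + t * θ = (s:ℝ) := by linarith [hθt]
      have e2 : -(k:ℝ) * (1 - θ) + -(m:ℝ) * θ = -(l:ℝ) := by nlinarith [hmkθ]
      have eA : A ^ (1 - θ) * A ^ θ = A := by
        rw [← Real.rpow_add' hA0 (by norm_num)]
        simp
      calc (i:ℝ) ^ (s:ℝ) * (j:ℝ) ^ (-(l:ℝ)) * A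
          = ((i:ℝ) ^ ((r:ℝ) * (1 - θ)) * (i:ℝ) ^ (t * θ)) *
            ((j:ℝ) ^ (-(k:ℝ) * (1 - θ)) * (j:ℝ) ^ (-(m:ℝ) * θ)) *
            (A ^ (1 - θ) * A ^ θ) := by
            rw [← Real.rpow_add hI, ← Real.rpow_add hJ, e1, e2, eA]
        _ = (i:ℝ) ^ ((r:ℝ) * (1 - θ)) * (j:ℝ) ^ (-(k:ℝ) * (1 - θ)) * A ^ (1 - θ) *
            ((i:ℝ) ^ (t * θ) * (j:ℝ) ^ (-(m:ℝ) * θ) * A ^ θ) := by ring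
    have hle : (i:ℝ) ^ (s:ℝ) * (j:ℝ) ^ (-(l:ℝ)) * A ≤ b ^ θ := by
      rw [heq]
      have hc1 : c ^ (1 - θ) ≤ 1 :=
        Real.rpow_le_one hc0 (hbd ν i j).le (by linarith)
      calc c ^ (1 - θ) * b ^ θ ≤ 1 * b ^ θ := by
            exact mul_le_mul_of_nonneg_right hc1 (Real.rpow_nonneg hb0 θ)
        _ = b ^ θ := one_mul _
    calc ENNReal.ofReal ((i:ℝ) ^ (s:ℝ) * (j:ℝ) ^ (-(l:ℝ)) * A)
        ≤ ENNReal.ofReal (b ^ θ) := ENNReal.ofReal_le_ofReal hle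
      _ = (ENNReal.ofReal b) ^ θ := by
          rw [← ENNReal.ofReal_rpow_of_nonneg hb0 hθpos.le]
      _ ≤ (T ν) ^ θ := by
          refine ENNReal.rpow_le_rpow ?_ hθpos.le
          exact le_iSup₂ (f := fun (i j : ℕ+) => ENNReal.ofReal ((i:ℝ) ^ t * (j:ℝ) ^ (-(m:ℝ)) *
            ‖x ν i j‖)) i j
  have hT : Tendsto T atTop (nhds 0) := hconv t ht
  have hTθ : Tendsto (fun ν => (T ν) ^ θ) atTop (nhds 0) := by
    have := (ENNReal.continuous_rpow_const (y := θ)).tendsto 0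
    have h0 : (0:ℝ≥0∞) ^ θ = 0 := ENNReal.zero_rpow_of_pos hθpos
    simpa [h0, Function.comp_def] using this.comp hT
  exact tendsto_of_tendsto_of_tendsto_of_le_of_le tendsto_const_nhds hTθ
    (fun ν => zero_le) key
end

section
/- For every k ∈ ℕ, 1 ≤ p < ∞ and every double sequence x : ℕ×ℕ → ℂ: if for all r ∈ ℕ one has ∑_j (sup_i i^r |x_{ij}|)^p · j^{-kp} < ∞, then for all r ∈ ℕ also sup_{i,j} i^r j^{-k'} |x_{ij}| < ∞ for every k' ≥ k; conversely, if for all r, sup_{i,j} i^r j^{-k} |x_{ij}| < ∞, then for all r, ∑_j (sup_i i^r |x_{ij}|)^p j^{-k'p} < ∞ whenever k' > k + 1/p. -/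
open ENNReal

theorem stmt_18 (k : ℕ) (p : ℝ) (hp : 1 ≤ p) (x : ℕ+ → ℕ+ → ℂ) :
    ((∀ r : ℕ, (∑' j : ℕ+,
        (⨆ i : ℕ+, ENNReal.ofReal ((i : ℝ) ^ (r : ℝ) * ‖x i j‖)) ^ p *
          ENNReal.ofReal ((j : ℝ) ^ (-(k : ℝ) * p))) ≠ ⊤) →
      ∀ k' : ℕ, k ≤ k' → ∀ r : ℕ, (⨆ i : ℕ+, ⨆ j : ℕ+,
        ENNReal.ofReal ((i : ℝ) ^ (r : ℝ) * (j : ℝ) ^ (-(k' : ℝ)) * ‖x i j‖)) ≠ ⊤) ∧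
    ((∀ r : ℕ, (⨆ i : ℕ+, ⨆ j : ℕ+,
        ENNReal.ofReal ((i : ℝ) ^ (r : ℝ) * (j : ℝ) ^ (-(k : ℝ)) * ‖x i j‖)) ≠ ⊤) →
      ∀ k' : ℕ, (k : ℝ) + 1 / p < (k' : ℝ) → ∀ r : ℕ, (∑' j : ℕ+,
        (⨆ i : ℕ+, ENNReal.ofReal ((i : ℝ) ^ (r : ℝ) * ‖x i j‖)) ^ p *
          ENNReal.ofReal ((j : ℝ) ^ (-(k' : ℝ) * p))) ≠ ⊤) := by
  constructor
  · intro h k' hk' r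
    have hp0 : (0:ℝ) < p := lt_of_lt_of_le one_pos hp
    have hpne : p ≠ 0 := ne_of_gt hp0
    set S := ∑' j : ℕ+,
        (⨆ i : ℕ+, ENNReal.ofReal ((i : ℝ) ^ (r : ℝ) * ‖x i j‖)) ^ p *
          ENNReal.ofReal ((j : ℝ) ^ (-(k : ℝ) * p)) with hSdef
    have hS : S ≠ ⊤ := h r
    have key : ∀ j : ℕ+, (⨆ i : ℕ+, ENNReal.ofReal ((i : ℝ) ^ (r : ℝ) * ‖x i j‖))
        ≤ S ^ (1/p) * ENNReal.ofReal ((j : ℝ) ^ (k : ℝ)) := by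
      intro j
      have hj1 : (1:ℝ) ≤ (j:ℝ) := by exact_mod_cast j.one_le
      have hj0 : (0:ℝ) < (j:ℝ) := lt_of_lt_of_le one_pos hj1
      have hle : (⨆ i : ℕ+, ENNReal.ofReal ((i : ℝ) ^ (r : ℝ) * ‖x i j‖)) ^ p *
          ENNReal.ofReal ((j : ℝ) ^ (-(k : ℝ) * p)) ≤ S := ENNReal.le_tsum j
      have hB0 : ENNReal.ofReal ((j : ℝ) ^ (-(k : ℝ) * p)) ≠ 0 := by
        simp [ENNReal.ofReal_eq_zero, not_le, Real.rpow_pos_of_pos hj0]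
      have hBt : ENNReal.ofReal ((j : ℝ) ^ (-(k : ℝ) * p)) ≠ ⊤ := ofReal_ne_top
      have h2 : (⨆ i : ℕ+, ENNReal.ofReal ((i : ℝ) ^ (r : ℝ) * ‖x i j‖)) ^ p
          ≤ S * ENNReal.ofReal ((j : ℝ) ^ ((k : ℝ) * p)) := by
        rw [← ENNReal.le_div_iff_mul_le (Or.inl hB0) (Or.inl hBt)] at hle
        refine hle.trans ?_
        rw [ENNReal.div_eq_inv_mul, mul_comm]
        gcongr
        rw [← ENNReal.ofReal_inv_of_pos (Real.rpow_pos_of_pos hj0 _),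
          ← Real.rpow_neg (le_of_lt hj0), neg_mul, neg_neg]
      calc (⨆ i : ℕ+, ENNReal.ofReal ((i : ℝ) ^ (r : ℝ) * ‖x i j‖))
          = ((⨆ i : ℕ+, ENNReal.ofReal ((i : ℝ) ^ (r : ℝ) * ‖x i j‖)) ^ p) ^ (1/p) := by
            rw [← ENNReal.rpow_mul, mul_one_div, div_self hpne, ENNReal.rpow_one]
        _ ≤ (S * ENNReal.ofReal ((j : ℝ) ^ ((k : ℝ) * p))) ^ (1/p) :=
            ENNReal.rpow_le_rpow h2 (by positivity)
        _ = S ^ (1/p) * ENNReal.ofReal ((j : ℝ) ^ (k : ℝ)) := by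
            rw [ENNReal.mul_rpow_of_nonneg _ _ (by positivity),
              ENNReal.ofReal_rpow_of_nonneg (by positivity) (by positivity)]
            congr 1
            rw [← Real.rpow_mul (le_of_lt hj0), mul_one_div, mul_div_assoc, div_self hpne, mul_one]
    have hbound : (⨆ i : ℕ+, ⨆ j : ℕ+,
        ENNReal.ofReal ((i : ℝ) ^ (r : ℝ) * (j : ℝ) ^ (-(k' : ℝ)) * ‖x i j‖))
        ≤ S ^ (1/p) := by
      refine iSup_le fun i => iSup_le fun j => ?_
      have hj1 : (1:ℝ) ≤ (j:ℝ) := by exact_mod_cast j.one_le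
      have hj0 : (0:ℝ) < (j:ℝ) := lt_of_lt_of_le one_pos hj1
      have e1 : (i : ℝ) ^ (r : ℝ) * (j : ℝ) ^ (-(k' : ℝ)) * ‖x i j‖
          = ((i : ℝ) ^ (r : ℝ) * ‖x i j‖) * ((j : ℝ) ^ (-(k' : ℝ))) := by ring
      rw [e1, ENNReal.ofReal_mul (by positivity)]
      calc ENNReal.ofReal ((i : ℝ) ^ (r : ℝ) * ‖x i j‖) *
            ENNReal.ofReal ((j : ℝ) ^ (-(k' : ℝ)))
          ≤ (⨆ i : ℕ+, ENNReal.ofReal ((i : ℝ) ^ (r : ℝ) * ‖x i j‖)) *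
            ENNReal.ofReal ((j : ℝ) ^ (-(k' : ℝ))) := by
            gcongr; exact le_iSup (fun i : ℕ+ => ENNReal.ofReal ((i : ℝ) ^ (r : ℝ) * ‖x i j‖)) i
        _ ≤ (S ^ (1/p) * ENNReal.ofReal ((j : ℝ) ^ (k : ℝ))) *
            ENNReal.ofReal ((j : ℝ) ^ (-(k' : ℝ))) := by gcongr; exact key j
        _ = S ^ (1/p) * ENNReal.ofReal ((j : ℝ) ^ ((k : ℝ) - (k' : ℝ))) := by
            rw [mul_assoc, ← ENNReal.ofReal_mul (by positivity),
              ← Real.rpow_add hj0, sub_eq_add_neg]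
        _ ≤ S ^ (1/p) * 1 := by
            gcongr
            rw [ENNReal.ofReal_le_one]
            exact Real.rpow_le_one_of_one_le_of_nonpos hj1 (by simp; exact_mod_cast hk')
        _ = S ^ (1/p) := mul_one _
    exact ne_top_of_le_ne_top (ENNReal.rpow_ne_top_of_nonneg (by positivity) hS) hbound
  · intro h k' hk' r
    have hp0 : (0:ℝ) < p := lt_of_lt_of_le one_pos hp
    have hpne : p ≠ 0 := ne_of_gt hp0
    set M := ⨆ i : ℕ+, ⨆ j : ℕ+,
        ENNReal.ofReal ((i : ℝ) ^ (r : ℝ) * (j : ℝ) ^ (-(k : ℝ)) * ‖x i j‖) with hMdef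
    have hM : M ≠ ⊤ := h r
    -- pointwise bound on the sup over i
    have key : ∀ j : ℕ+, (⨆ i : ℕ+, ENNReal.ofReal ((i : ℝ) ^ (r : ℝ) * ‖x i j‖))
        ≤ M * ENNReal.ofReal ((j : ℝ) ^ (k : ℝ)) := by
      intro j
      refine iSup_le fun i => ?_
      have hj1 : (1:ℝ) ≤ (j:ℝ) := by exact_mod_cast j.one_le
      have hj0 : (0:ℝ) < (j:ℝ) := lt_of_lt_of_le one_pos hj1
      have e1 : (i : ℝ) ^ (r : ℝ) * ‖x i j‖
          = ((i : ℝ) ^ (r : ℝ) * (j : ℝ) ^ (-(k : ℝ)) * ‖x i j‖) * (j : ℝ) ^ (k : ℝ) := by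
        rw [mul_comm _ ((j:ℝ) ^ (k:ℝ))]
        rw [show (i : ℝ) ^ (r : ℝ) * (j : ℝ) ^ (-(k : ℝ)) * ‖x i j‖
          = (j : ℝ) ^ (-(k : ℝ)) * ((i : ℝ) ^ (r : ℝ) * ‖x i j‖) by ring,
          ← mul_assoc, ← Real.rpow_add hj0]
        simp
      rw [e1, ENNReal.ofReal_mul (by positivity)]
      gcongr
      exact le_trans (le_iSup (fun j : ℕ+ =>
        ENNReal.ofReal ((i : ℝ) ^ (r : ℝ) * (j : ℝ) ^ (-(k : ℝ)) * ‖x i j‖)) j)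
        (le_iSup (fun i : ℕ+ => ⨆ j : ℕ+,
        ENNReal.ofReal ((i : ℝ) ^ (r : ℝ) * (j : ℝ) ^ (-(k : ℝ)) * ‖x i j‖)) i)
    have hterm : ∀ j : ℕ+,
        (⨆ i : ℕ+, ENNReal.ofReal ((i : ℝ) ^ (r : ℝ) * ‖x i j‖)) ^ p *
          ENNReal.ofReal ((j : ℝ) ^ (-(k' : ℝ) * p))
        ≤ M ^ p * ENNReal.ofReal ((j : ℝ) ^ (((k : ℝ) - (k' : ℝ)) * p)) := by
      intro j
      have hj1 : (1:ℝ) ≤ (j:ℝ) := by exact_mod_cast j.one_le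
      have hj0 : (0:ℝ) < (j:ℝ) := lt_of_lt_of_le one_pos hj1
      calc (⨆ i : ℕ+, ENNReal.ofReal ((i : ℝ) ^ (r : ℝ) * ‖x i j‖)) ^ p *
          ENNReal.ofReal ((j : ℝ) ^ (-(k' : ℝ) * p))
          ≤ (M * ENNReal.ofReal ((j : ℝ) ^ (k : ℝ))) ^ p *
            ENNReal.ofReal ((j : ℝ) ^ (-(k' : ℝ) * p)) := by
            exact mul_le_mul_left (ENNReal.rpow_le_rpow (key j) (le_of_lt hp0)) _
        _ = M ^ p * ENNReal.ofReal ((j : ℝ) ^ (((k : ℝ) - (k' : ℝ)) * p)) := by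
            rw [ENNReal.mul_rpow_of_nonneg _ _ (le_of_lt hp0),
              ENNReal.ofReal_rpow_of_nonneg (by positivity) (le_of_lt hp0),
              mul_assoc, ← ENNReal.ofReal_mul (by positivity),
              ← Real.rpow_mul (le_of_lt hj0)]
            rw [← Real.rpow_add hj0]
            ring_nf
    have hsum : (∑' j : ℕ+, ENNReal.ofReal ((j : ℝ) ^ (((k : ℝ) - (k' : ℝ)) * p))) ≠ ⊤ := by
      have hexp : ((k : ℝ) - (k' : ℝ)) * p < -1 := by
        have h1 : 1 < ((k' : ℝ) - (k : ℝ)) * p := by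
          have : 1 / p < (k' : ℝ) - (k : ℝ) := by linarith
          calc (1:ℝ) = (1/p) * p := by field_simp
            _ < ((k' : ℝ) - (k : ℝ)) * p := by gcongr
        nlinarith
      have hsummable : Summable (fun n : ℕ => (n : ℝ) ^ (((k : ℝ) - (k' : ℝ)) * p)) :=
        Real.summable_nat_rpow.mpr hexp
      have h2 : Summable (fun j : ℕ+ => ((j : ℕ) : ℝ) ^ (((k : ℝ) - (k' : ℝ)) * p)) :=
        hsummable.comp_injective PNat.coe_injective
      have h3 : Summable (fun j : ℕ+ => (((j : ℕ) : ℝ) ^ (((k : ℝ) - (k' : ℝ)) * p)).toNNReal) :=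
        h2.toNNReal
      have h4 : (∑' j : ℕ+, ((((j : ℕ) : ℝ) ^ (((k : ℝ) - (k' : ℝ)) * p)).toNNReal : ℝ≥0∞)) ≠ ⊤ :=
        ENNReal.tsum_coe_ne_top_iff_summable.mpr h3
      convert h4 using 2 with j
      rfl
    refine ne_top_of_le_ne_top ?_ (ENNReal.tsum_le_tsum hterm)
    rw [ENNReal.tsum_mul_left]
    exact ENNReal.mul_ne_top (ENNReal.rpow_ne_top_of_nonneg (le_of_lt hp0) hM) hsum
end
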